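/- Let (Q, 𝔪, k) be a local ring with residue field of characteristic zero, (f, g) an exact pair of zero divisors, R = Q/(f), S = Q/(f, g). Let M be an R-module with free resolution U over Q that is a semi-free dg module over the Tate resolution A = Q⟨y, t | ∂y = f, ∂t = gy⟩ of R, and let W be the mapping cone of the Eisenbud operator τ on U' ⊗_R S. Then multiplication by t (the degree-2 divided power variable) induces a short exact sequence of complexes of S-modules 0 → Σ²(U ⊗_Q S) → U ⊗_Q S → W → 0. -/

import Mathlib

open IsLocalRing DirectSum

section

variable (Q : Type) [CommRing Q]
variable (V : ℤ → Type) [∀ n, AddCommGroup (V n)] [∀ n, Module Q (V n)]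

/-- Cast between the members of a family of modules along an equality of indices. -/
def vcast {m m' : ℤ} (h : m = m') : V m →ₗ[Q] V m' := by subst h; exact LinearMap.id

/-- The underlying graded module of a semi-free dg module `U` over the Tate resolution
`A = Q⟨y,t | ∂y = f, ∂t = gy⟩` of `R = Q/(f)` with semi-basis `V`:
`U n = ⊕_{i ∈ ℕ} y_i V_{n-i}`, the `i`-th summand corresponding to `y_i V_{n-i}`
(where `y_{2a} = t^{(a)}` and `y_{2a+1} = t^{(a)} y`). -/
abbrev smod (n : ℤ) : Type := ⨁ (i : ℕ), V (n - (i : ℤ))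

/-- Inclusion of the `i`-th summand `y_i V_{n-i}` of `U n`. -/
noncomputable def lofU (n : ℤ) (i : ℕ) : V (n - i) →ₗ[Q] smod V n :=
  DirectSum.lof Q ℕ (fun i => V (n - i)) i

/-- Projection onto the `i`-th summand `y_i V_{n-i}` of `U n`. -/
noncomputable def compU (n : ℤ) (i : ℕ) : smod V n →ₗ[Q] V (n - i) :=
  DirectSum.component Q ℕ (fun i => V (n - i)) i

/-- Multiplication by the degree-one exterior variable `y`:
`y · (y_{2a} v) = y_{2a+1} v` and `y · (y_{2a+1} v) = 0`. -/
noncomputable def mulY (n : ℤ) : smod V n →ₗ[Q] smod V (n + 1) :=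
  DirectSum.toModule Q ℕ _ fun i =>
    if i % 2 = 0 then
      (lofU Q V (n + 1) (i + 1)).comp
        (vcast Q V (show n - (i : ℤ) = (n + 1) - ((i + 1 : ℕ) : ℤ) by push_cast; ring))
    else 0

/-- Multiplication by the degree-two divided-power variable `t = y₂`:
`y₂ · (y_{2a+ε} v) = (a+1) · y_{2a+2+ε} v` for `ε ∈ {0,1}`. -/
noncomputable def mulT (n : ℤ) : smod V n →ₗ[Q] smod V (n + 2) :=
  DirectSum.toModule Q ℕ _ fun i =>
    (i / 2 + 1 : ℕ) •
      ((lofU Q V (n + 2) (i + 2)).comp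
        (vcast Q V (show n - (i : ℤ) = (n + 2) - ((i + 2 : ℕ) : ℤ) by push_cast; ring)))

/-- Cast between graded pieces of `U` along an equality of degrees. -/
noncomputable def ucast {m m' : ℤ} (h : m = m') : smod V m →ₗ[Q] smod V m' := by
  subst h; exact LinearMap.id

/-- Multiplication by `y₂`, as a map `U (n-2) → U n`. -/
noncomputable def mulT' (n : ℤ) : smod V (n - 2) →ₗ[Q] smod V n :=
  (ucast Q V (show n - 2 + 2 = n by ring)).comp (mulT Q V (n - 2))

/-- Inclusion `V n = y₀ V_n ⊆ U n` of the semi-basis component. -/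
noncomputable def iotaV (n : ℤ) : V n →ₗ[Q] smod V n :=
  (lofU Q V n 0).comp (vcast Q V (show (n : ℤ) = n - ((0 : ℕ) : ℤ) by push_cast; ring))

/-- The `n`-th term `V_{n-1} ⊕ V_n` of the mapping cone `W` of the Eisenbud operator. -/
abbrev cone (n : ℤ) : Type := V (n - 1) × V n

variable (d : ∀ i j : ℤ, smod V i →ₗ[Q] smod V j)

/-- The differential of the mapping cone `W` of the Eisenbud operator `τ`
(cf. Lemma `taudesc`): `∂^W (x, a) = (a_{n-2} - x_{n-2}, a_{n-1})`, where for `v ∈ V_m`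
the element `v_j` denotes the component of `∂v` in `y_{m-j} V_j`. -/
noncomputable def coneD (n : ℤ) : cone V n →ₗ[Q] cone V (n - 1) :=
  LinearMap.prod
    (((vcast Q V (show (n - 1) - ((1 : ℕ) : ℤ) = n - 1 - 1 by push_cast; ring)).comp
        ((compU Q V (n - 1) 1).comp ((d n (n - 1)).comp (iotaV Q V n)))).comp
        (LinearMap.snd Q (V (n - 1)) (V n)) -
      ((vcast Q V (show (n - 2) - ((0 : ℕ) : ℤ) = n - 1 - 1 by push_cast; ring)).comp
        ((compU Q V (n - 2) 0).comp ((d (n - 1) (n - 2)).comp (iotaV Q V (n - 1))))).comp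
        (LinearMap.fst Q (V (n - 1)) (V n)))
    (((vcast Q V (show (n - 1) - ((0 : ℕ) : ℤ) = n - 1 by push_cast; ring)).comp
        ((compU Q V (n - 1) 0).comp ((d n (n - 1)).comp (iotaV Q V n)))).comp
        (LinearMap.snd Q (V (n - 1)) (V n)))

/-- The map `ω : U ⊗ S → W`, `ω(u) = (x, a)` where `u = a + y x + l` with `a ∈ V_n`,
`x ∈ V_{n-1}`, `l ∈ L_n = ⊕_{i≥2} y_i V_{n-i}`. -/
noncomputable def omegaMap (n : ℤ) : smod V n →ₗ[Q] cone V n :=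
  LinearMap.prod
    ((vcast Q V (show n - ((1 : ℕ) : ℤ) = n - 1 by push_cast; ring)).comp (compU Q V n 1))
    ((vcast Q V (show n - ((0 : ℕ) : ℤ) = n by push_cast; ring)).comp (compU Q V n 0))
section Helpers

/-! ### Auxiliary cast lemmas -/

lemma aux_vcast_vcast {m m' m'' : ℤ} (h : m = m') (h' : m' = m'') (x : V m) :
    vcast Q V h' (vcast Q V h x) = vcast Q V (h.trans h') x := by subst h h'; rfl

lemma aux_vcast_self {m : ℤ} (h : m = m) (x : V m) : vcast Q V h x = x := rfl

lemma aux_ucast_ucast {m m' m'' : ℤ} (h : m = m') (h' : m' = m'') (x : smod V m) :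
    ucast Q V h' (ucast Q V h x) = ucast Q V (h.trans h') x := by subst h h'; rfl

lemma aux_ucast_self {m : ℤ} (h : m = m) (x : smod V m) : ucast Q V h x = x := rfl

lemma aux_ucast_zero_iff {m m' : ℤ} (h : m = m') (x : smod V m) :
    ucast Q V h x = 0 ↔ x = 0 := by subst h; exact Iff.rfl

lemma aux_compU_ucast {m m' : ℤ} (h : m = m') (j : ℕ) (x : smod V m) :
    compU Q V m' j (ucast Q V h x) =
      vcast Q V (show m - (j : ℤ) = m' - (j : ℤ) by rw [h]) (compU Q V m j x) := by
  subst h; rfl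

lemma aux_ucast_lofU {m m' : ℤ} (h : m = m') (i : ℕ) (x : V (m - i)) :
    ucast Q V h (lofU Q V m i x) =
      lofU Q V m' i (vcast Q V (show m - (i : ℤ) = m' - (i : ℤ) by rw [h]) x) := by
  subst h; rfl

lemma aux_mulT_ucast {m m' : ℤ} (h : m = m') (x : smod V m) :
    mulT Q V m' (ucast Q V h x) =
      ucast Q V (show m + 2 = m' + 2 by rw [h]) (mulT Q V m x) := by
  subst h; rfl

lemma aux_mulY_ucast {m m' : ℤ} (h : m = m') (x : smod V m) :
    mulY Q V m' (ucast Q V h x) =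
      ucast Q V (show m + 1 = m' + 1 by rw [h]) (mulY Q V m x) := by
  subst h; rfl

lemma aux_d_ucast {i i' j : ℤ} (hi : i = i') (x : smod V i) :
    d i' j (ucast Q V hi x) = d i j x := by subst hi; rfl

lemma aux_d_congr {i j j' : ℤ} (hj : j = j') (x : smod V i) :
    d i j' x = ucast Q V hj (d i j x) := by subst hj; rfl

/-! ### Component computations -/

lemma aux_compU_lofU_self (n : ℤ) (i : ℕ) (x : V (n - i)) :
    compU Q V n i (lofU Q V n i x) = x :=
  DirectSum.component.lof_self (R := Q) (ι := ℕ) (M := fun i => V (n - i)) i x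

lemma aux_compU_lofU_ne (n : ℤ) {i j : ℕ} (hij : i ≠ j) (x : V (n - i)) :
    compU Q V n j (lofU Q V n i x) = 0 := by
  rw [compU, lofU, DirectSum.component.of, dif_neg hij]

lemma aux_of_eq_lofU (n : ℤ) (i : ℕ) (x : V (n - i)) :
    DirectSum.of (fun i : ℕ => V (n - i)) i x = lofU Q V n i x := rfl

lemma aux_mulT_lofU (n : ℤ) (i : ℕ) (x : V (n - i)) :
    mulT Q V n (lofU Q V n i x) =
      (i / 2 + 1 : ℕ) • lofU Q V (n + 2) (i + 2)
        (vcast Q V (show n - (i : ℤ) = (n + 2) - ((i + 2 : ℕ) : ℤ) by push_cast; ring) x) := by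
  rw [mulT, lofU, DirectSum.toModule_lof]; rfl

lemma aux_mulY_lofU_even (n : ℤ) (i : ℕ) (h : i % 2 = 0) (x : V (n - i)) :
    mulY Q V n (lofU Q V n i x) =
      lofU Q V (n + 1) (i + 1)
        (vcast Q V (show n - (i : ℤ) = (n + 1) - ((i + 1 : ℕ) : ℤ) by push_cast; ring) x) := by
  rw [mulY, lofU, DirectSum.toModule_lof, if_pos h]; rfl

lemma aux_mulY_lofU_odd (n : ℤ) (i : ℕ) (h : ¬ i % 2 = 0) (x : V (n - i)) :
    mulY Q V n (lofU Q V n i x) = 0 := by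
  rw [mulY, lofU, DirectSum.toModule_lof, if_neg h]; rfl

lemma aux_compU_mulT_low (n : ℤ) (u : smod V n) {j : ℕ} (hj : j < 2) :
    compU Q V (n + 2) j (mulT Q V n u) = 0 := by
  induction u using DirectSum.induction_on with
  | zero => simp
  | of i x =>
      rw [aux_of_eq_lofU Q V, aux_mulT_lofU Q V _ _, map_nsmul,
        aux_compU_lofU_ne Q V _ (by omega : i + 2 ≠ j), smul_zero]
  | add x y hx hy => rw [map_add, map_add, hx, hy]; simp

lemma aux_compU_mulT_high (n : ℤ) (u : smod V n) (j : ℕ) :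
    compU Q V (n + 2) (j + 2) (mulT Q V n u) =
      (j / 2 + 1 : ℕ) •
        vcast Q V (show n - (j : ℤ) = (n + 2) - ((j + 2 : ℕ) : ℤ) by push_cast; ring)
          (compU Q V n j u) := by
  induction u using DirectSum.induction_on with
  | zero => simp
  | of i x =>
      rcases eq_or_ne i j with rfl | hij
      · rw [aux_of_eq_lofU Q V, aux_mulT_lofU Q V _ _, map_nsmul, aux_compU_lofU_self Q V _ _,
          aux_compU_lofU_self Q V _ _]
      · rw [aux_of_eq_lofU Q V, aux_mulT_lofU Q V _ _, map_nsmul,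
          aux_compU_lofU_ne Q V _ (by omega : i + 2 ≠ j + 2),
          aux_compU_lofU_ne Q V _ hij]; simp
  | add x y hx hy => rw [map_add, map_add, hx, hy]; simp [smul_add]

lemma aux_compU_mulY_zero (n : ℤ) (u : smod V n) :
    compU Q V (n + 1) 0 (mulY Q V n u) = 0 := by
  induction u using DirectSum.induction_on with
  | zero => simp
  | of i x =>
      rw [aux_of_eq_lofU Q V]
      by_cases h : i % 2 = 0
      · rw [aux_mulY_lofU_even Q V n i h, aux_compU_lofU_ne Q V _ (by omega : i + 1 ≠ 0)]
      · rw [aux_mulY_lofU_odd Q V n i h, map_zero]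
  | add x y hx hy => rw [map_add, map_add, hx, hy]; simp

lemma aux_compU_mulY_one (n : ℤ) (u : smod V n) :
    compU Q V (n + 1) 1 (mulY Q V n u) =
      vcast Q V (show n - ((0 : ℕ) : ℤ) = (n + 1) - ((1 : ℕ) : ℤ) by push_cast; ring)
        (compU Q V n 0 u) := by
  induction u using DirectSum.induction_on with
  | zero => simp
  | of i x =>
      rw [aux_of_eq_lofU Q V]
      rcases eq_or_ne i 0 with rfl | hi
      · rw [aux_mulY_lofU_even Q V n 0 rfl, aux_compU_lofU_self Q V _ _, aux_compU_lofU_self Q V _ _]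
      · rw [aux_compU_lofU_ne Q V _ hi, map_zero]
        by_cases h : i % 2 = 0
        · rw [aux_mulY_lofU_even Q V n i h, aux_compU_lofU_ne Q V _ (by omega : i + 1 ≠ 1)]
        · rw [aux_mulY_lofU_odd Q V n i h, map_zero]
  | add x y hx hy => rw [map_add, map_add, hx, hy]; simp

end Helpers
section Helpers2

/-! ### Membership in `I • ⊤` -/

lemma aux_map_mem_smul_top {M N : Type} [AddCommGroup M] [Module Q M]
    [AddCommGroup N] [Module Q N] (L : M →ₗ[Q] N) {I : Ideal Q} {x : M}
    (hx : x ∈ I • (⊤ : Submodule Q M)) : L x ∈ I • (⊤ : Submodule Q N) := by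
  have h1 : L x ∈ Submodule.map L (I • ⊤) := Submodule.mem_map_of_mem hx
  rw [Submodule.map_smul''] at h1
  exact (smul_mono_right I le_top : I • Submodule.map L ⊤ ≤ I • ⊤) h1

lemma aux_smul_mem_smul_top {M : Type} [AddCommGroup M] [Module Q M]
    {I : Ideal Q} {q : Q} (hq : q ∈ I) (x : M) :
    q • x ∈ I • (⊤ : Submodule Q M) :=
  Submodule.smul_mem_smul hq trivial

lemma aux_ucast_mem_iff {m m' : ℤ} (h : m = m') {I : Ideal Q} {x : smod V m} :
    ucast Q V h x ∈ I • (⊤ : Submodule Q (smod V m')) ↔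
      x ∈ I • (⊤ : Submodule Q (smod V m)) := by subst h; exact Iff.rfl

lemma aux_vcast_mem_iff {m m' : ℤ} (h : m = m') {I : Ideal Q} {x : V m} :
    vcast Q V h x ∈ I • (⊤ : Submodule Q (V m')) ↔
      x ∈ I • (⊤ : Submodule Q (V m)) := by subst h; exact Iff.rfl

lemma aux_mem_smul_top_iff_components {I : Ideal Q} (n : ℤ) (u : smod V n) :
    u ∈ I • (⊤ : Submodule Q (smod V n)) ↔
      ∀ j : ℕ, compU Q V n j u ∈ I • (⊤ : Submodule Q (V (n - j))) := by
  classical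
  constructor
  · exact fun h j => aux_map_mem_smul_top Q (compU Q V n j) h
  · intro h
    rw [← DirectSum.sum_support_of u]
    exact Submodule.sum_mem _ fun j _ => aux_map_mem_smul_top Q (lofU Q V n j) (h j)

lemma aux_mem_smul_top_prod_iff {M N : Type} [AddCommGroup M] [Module Q M]
    [AddCommGroup N] [Module Q N] {I : Ideal Q} (x : M × N) :
    x ∈ I • (⊤ : Submodule Q (M × N)) ↔
      x.1 ∈ I • (⊤ : Submodule Q M) ∧ x.2 ∈ I • (⊤ : Submodule Q N) := by
  constructor
  · exact fun h => ⟨aux_map_mem_smul_top Q (LinearMap.fst Q M N) h,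
      aux_map_mem_smul_top Q (LinearMap.snd Q M N) h⟩
  · rintro ⟨h1, h2⟩
    have : x = LinearMap.inl Q M N x.1 + LinearMap.inr Q M N x.2 := by simp
    rw [this]
    exact Submodule.add_mem _ (aux_map_mem_smul_top Q (LinearMap.inl Q M N) h1)
      (aux_map_mem_smul_top Q (LinearMap.inr Q M N) h2)

/-! ### Local ring / freeness facts -/

lemma aux_isUnit_natCast [IsLocalRing Q] [CharZero (ResidueField Q)]
    (m : ℕ) (hm : m ≠ 0) : IsUnit (m : Q) := by
  rw [← IsLocalRing.residue_ne_zero_iff_isUnit]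
  rw [map_natCast]
  exact_mod_cast Nat.cast_ne_zero.mpr hm

lemma aux_unit_smul_mem_iff {M : Type} [AddCommGroup M] [Module Q M]
    {c : Q} (hc : IsUnit c) {x : M} {p : Submodule Q M} :
    c • x ∈ p ↔ x ∈ p := by
  constructor
  · intro h
    have := p.smul_mem ((hc.unit⁻¹ : Qˣ) : Q) h
    rwa [smul_smul, IsUnit.val_inv_mul, one_smul] at this
  · exact fun h => p.smul_mem c h

lemma aux_gsmul_zero_mem {M : Type} [AddCommGroup M] [Module Q M] [Module.Free Q M]
    {f g : Q} (hanng : ∀ x : Q, x * g = 0 ↔ x ∈ Ideal.span {f}) {x : M}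
    (hx : g • x = 0) : x ∈ Ideal.span ({f} : Set Q) • (⊤ : Submodule Q M) := by
  classical
  let b := Module.Free.chooseBasis Q M
  have hcoef : ∀ i, b.repr x i ∈ Ideal.span ({f} : Set Q) := by
    intro i
    have h0 : g * b.repr x i = 0 := by
      have := congrArg (fun y => b.repr y i) hx
      simpa using this
    exact (hanng _).1 (by rw [mul_comm] at h0; exact h0)
  have hsum : ((b.repr x).sum fun i c => c • b i) = x := by
    rw [← Finsupp.linearCombination_apply]
    exact b.linearCombination_repr x
  rw [← hsum, Finsupp.sum]
  exact Submodule.sum_mem _ fun i _ =>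
    Submodule.smul_mem_smul (hcoef i) trivial

end Helpers2
section Helpers3

lemma aux_compU_mulT'_low (n : ℤ) (v : smod V (n - 2)) {j : ℕ} (hj : j < 2) :
    compU Q V n j (mulT' Q V n v) = 0 := by
  rw [mulT', LinearMap.comp_apply,
    aux_compU_ucast Q V (show n - 2 + 2 = n by ring),
    aux_compU_mulT_low Q V _ _ hj, map_zero]

lemma aux_compU_mulT'_high (n : ℤ) (v : smod V (n - 2)) (j : ℕ) :
    compU Q V n (j + 2) (mulT' Q V n v) =
      (j / 2 + 1 : ℕ) •
        vcast Q V (show (n - 2) - (j : ℤ) = n - ((j + 2 : ℕ) : ℤ) by push_cast; ring)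
          (compU Q V (n - 2) j v) := by
  rw [mulT', LinearMap.comp_apply,
    aux_compU_ucast Q V (show n - 2 + 2 = n by ring),
    aux_compU_mulT_high Q V _ _ j, map_nsmul, aux_vcast_vcast]

lemma aux_dMulT' (g : Q)
    (hLeib : ∀ (n : ℤ) (u : smod V n),
      d (n + 2) (n + 1) (mulT Q V n u) =
        g • mulY Q V n u +
          (ucast Q V (show n - 1 + 2 = n + 1 by ring)) (mulT Q V (n - 1) (d n (n - 1) u)))
    (n : ℤ) (v : smod V (n - 2)) :
    d n (n - 1) (mulT' Q V n v) =
      mulT' Q V (n - 1) (d (n - 2) (n - 1 - 2) v) +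
        ucast Q V (show n - 2 + 1 = n - 1 by ring) (g • mulY Q V (n - 2) v) := by
  rw [mulT', LinearMap.comp_apply,
    aux_d_ucast Q V d (show n - 2 + 2 = n by ring),
    aux_d_congr Q V d (show n - 2 + 1 = n - 1 by ring),
    hLeib (n - 2) v, map_add, aux_ucast_ucast]
  rw [mulT', LinearMap.comp_apply,
    aux_d_congr Q V d (show n - 2 - 1 = n - 1 - 2 by ring) v,
    aux_mulT_ucast Q V (show n - 2 - 1 = n - 1 - 2 by ring), aux_ucast_ucast]
  exact add_comm _ _

end Helpers3
section Helpers4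

lemma aux_lemA (f g : Q) (hanng : ∀ x : Q, x * g = 0 ↔ x ∈ Ideal.span {f})
    [∀ n, Module.Free Q (V n)]
    (hcomplex : ∀ (n : ℤ) (u : smod V n), d (n - 1) (n - 2) (d n (n - 1) u) = 0)
    (hLeib : ∀ (n : ℤ) (u : smod V n),
      d (n + 2) (n + 1) (mulT Q V n u) =
        g • mulY Q V n u +
          (ucast Q V (show n - 1 + 2 = n + 1 by ring)) (mulT Q V (n - 1) (d n (n - 1) u)))
    (n : ℤ) (u : smod V n) :
    d (n + 1) n (mulY Q V n u) +
      ucast Q V (show n - 1 + 1 = n by ring) (mulY Q V (n - 1) (d n (n - 1) u)) ∈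
      Ideal.span ({f, g} : Set Q) • (⊤ : Submodule Q (smod V n)) := by
  have hgX : g • (d (n + 1) n (mulY Q V n u) +
      ucast Q V (show n - 1 + 1 = n by ring) (mulY Q V (n - 1) (d n (n - 1) u))) = 0 := by
    have h2 := hcomplex (n + 2) (mulT Q V n u)
    rw [aux_d_congr Q V d (show (n : ℤ) + 1 = n + 2 - 1 by ring) (mulT Q V n u),
      hLeib n u, aux_d_ucast Q V d (show (n : ℤ) + 1 = n + 2 - 1 by ring),
      aux_d_congr Q V d (show (n : ℤ) = n + 2 - 2 by ring),
      aux_ucast_zero_iff, map_add, map_smul,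
      aux_d_ucast Q V d (show n - 1 + 2 = n + 1 by ring),
      aux_d_congr Q V d (show n - 1 + 1 = n by ring)
        (mulT Q V (n - 1) (d n (n - 1) u)),
      hLeib (n - 1) (d n (n - 1) u),
      aux_d_congr Q V d (show n - 2 = n - 1 - 1 by ring) (d n (n - 1) u),
      hcomplex n u, map_zero, map_zero, map_zero] at h2
    simpa [smul_add, map_smul] using h2
  rw [aux_mem_smul_top_iff_components]
  intro j
  have hj : g • compU Q V n j (d (n + 1) n (mulY Q V n u) +
      ucast Q V (show n - 1 + 1 = n by ring) (mulY Q V (n - 1) (d n (n - 1) u))) = 0 := by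
    rw [← map_smul, hgX, map_zero]
  have := aux_gsmul_zero_mem Q (M := V (n - j)) hanng hj
  exact Submodule.smul_mono_left
    (Ideal.span_mono (by intro x hx; simp only [Set.mem_singleton_iff] at hx; simp [hx])) this

end Helpers4
section Helpers5

lemma aux_TS' [IsLocalRing Q] [CharZero (ResidueField Q)] (n : ℤ) (u : smod V n) :
    ∃ v : smod V (n - 2), mulT' Q V n v =
      u - lofU Q V n 0 (compU Q V n 0 u) - lofU Q V n 1 (compU Q V n 1 u) := by
  induction u using DirectSum.induction_on with
  | zero => exact ⟨0, by simp⟩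
  | of i x =>
    rw [aux_of_eq_lofU Q V]
    match i with
    | 0 =>
      refine ⟨0, ?_⟩
      rw [map_zero, aux_compU_lofU_self Q V _ _,
        aux_compU_lofU_ne Q V _ (by omega : (0 : ℕ) ≠ 1), map_zero]
      simp
    | 1 =>
      refine ⟨0, ?_⟩
      rw [map_zero, aux_compU_lofU_self Q V _ _,
        aux_compU_lofU_ne Q V _ (by omega : (1 : ℕ) ≠ 0), map_zero]
      simp
    | (j + 2) =>
      have hu : IsUnit ((j / 2 + 1 : ℕ) : Q) := aux_isUnit_natCast Q _ (by omega)
      refine ⟨lofU Q V (n - 2) j (((hu.unit⁻¹ : Qˣ) : Q) • vcast Q V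
        (show n - ((j + 2 : ℕ) : ℤ) = (n - 2) - (j : ℤ) by push_cast; ring) x), ?_⟩
      rw [aux_compU_lofU_ne Q V _ (by omega : j + 2 ≠ 0), map_zero,
        aux_compU_lofU_ne Q V _ (by omega : j + 2 ≠ 1), map_zero, sub_zero, sub_zero]
      rw [mulT', LinearMap.comp_apply, aux_mulT_lofU Q V _ _, map_nsmul,
        aux_ucast_lofU]
      rw [map_smul, map_smul, aux_vcast_vcast, aux_vcast_vcast,
        ← Nat.cast_smul_eq_nsmul Q (j / 2 + 1), map_smul, smul_smul, hu.mul_val_inv, one_smul,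
        aux_vcast_self]
  | add x y hx hy =>
    obtain ⟨v1, h1⟩ := hx
    obtain ⟨v2, h2⟩ := hy
    refine ⟨v1 + v2, ?_⟩
    rw [map_add, h1, h2, map_add, map_add, map_add, map_add]
    abel

end Helpers5
section Helpers6

lemma aux_omega_fst (n : ℤ) (u : smod V n) :
    (omegaMap Q V n u).1 =
      vcast Q V (show n - ((1 : ℕ) : ℤ) = n - 1 by push_cast; ring) (compU Q V n 1 u) := rfl

lemma aux_omega_snd (n : ℤ) (u : smod V n) :
    (omegaMap Q V n u).2 =
      vcast Q V (show n - ((0 : ℕ) : ℤ) = n by push_cast; ring) (compU Q V n 0 u) := rfl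

lemma aux_coneD_fst (n : ℤ) (w : cone V n) :
    (coneD Q V d n w).1 =
      vcast Q V (show (n - 1) - ((1 : ℕ) : ℤ) = n - 1 - 1 by push_cast; ring)
          (compU Q V (n - 1) 1 (d n (n - 1) (iotaV Q V n w.2))) -
        vcast Q V (show (n - 2) - ((0 : ℕ) : ℤ) = n - 1 - 1 by push_cast; ring)
          (compU Q V (n - 2) 0 (d (n - 1) (n - 2) (iotaV Q V (n - 1) w.1))) := rfl

lemma aux_coneD_snd (n : ℤ) (w : cone V n) :
    (coneD Q V d n w).2 =
      vcast Q V (show (n - 1) - ((0 : ℕ) : ℤ) = n - 1 by push_cast; ring)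
          (compU Q V (n - 1) 0 (d n (n - 1) (iotaV Q V n w.2))) := rfl

lemma aux_iota_lof (n : ℤ) (a : V n) :
    iotaV Q V n a = lofU Q V n 0 (vcast Q V (show (n : ℤ) = n - ((0 : ℕ) : ℤ) by push_cast; ring) a) := rfl

end Helpers6
/-- **Lemma 2.2: the short exact sequence `0 → Σ²(U ⊗ S) → U ⊗ S → W → 0`.**
Let `(Q,𝔪,k)` be a local ring whose residue field has characteristic zero, `(f,g)` an
exact pair of zero divisors, `R = Q/(f)`, `S = Q/(f,g)`.  Let `U` be a free resolution
of an `R`-module over `Q` which is a semi-free dg module over the Tate resolution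
`A = Q⟨y,t⟩`, with semi-basis `V` (so `U n = ⊕ᵢ y_i V_{n-i}`, the differential `d`
satisfies `d² = 0` and the Leibniz rule `∂(t·u) = g·(y·u) + t·∂u`), and let `W` be the
mapping cone of the Eisenbud operator `τ`.  Then, working modulo `J·(-)` with
`J = (f,g)` (i.e. after applying `- ⊗_Q S`), multiplication by `t = y₂` and the map `ω`
are chain maps fitting in a short exact sequence of complexes of `S`-modules
`0 → Σ²(U ⊗_Q S) →_{·y₂} U ⊗_Q S →_ω W → 0`. -/
theorem mapping_cone_short_exact_sequence
    [IsLocalRing Q] [CharZero (ResidueField Q)]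
    (f g : Q) (hf : f ≠ 0) (hg : g ≠ 0)
    (hannf : ∀ x : Q, x * f = 0 ↔ x ∈ Ideal.span {g})
    (hanng : ∀ x : Q, x * g = 0 ↔ x ∈ Ideal.span {f})
    [∀ n, Module.Free Q (V n)]
    (hVneg : ∀ n : ℤ, n < 0 → Subsingleton (V n))
    (hcomplex : ∀ (n : ℤ) (u : smod V n), d (n - 1) (n - 2) (d n (n - 1) u) = 0)
    (hLeib : ∀ (n : ℤ) (u : smod V n),
      d (n + 2) (n + 1) (mulT Q V n u) =
        g • mulY Q V n u +
          (ucast Q V (show n - 1 + 2 = n + 1 by ring)) (mulT Q V (n - 1) (d n (n - 1) u))) :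
    -- `·y₂` is injective modulo `J`
    (∀ (n : ℤ) (u : smod V (n - 2)),
      mulT' Q V n u ∈ (Ideal.span {f, g} • (⊤ : Submodule Q (smod V n))) →
        u ∈ (Ideal.span {f, g} • (⊤ : Submodule Q (smod V (n - 2))))) ∧
    -- `·y₂` is a chain map modulo `J`
    (∀ (n : ℤ) (u : smod V (n - 2)),
      d n (n - 1) (mulT' Q V n u) - mulT' Q V (n - 1) (d (n - 2) (n - 1 - 2) u) ∈
        (Ideal.span {f, g} • (⊤ : Submodule Q (smod V (n - 1))))) ∧
    -- exactness at `U ⊗ S`: `ker(ω) = im(·y₂)` modulo `J`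
    (∀ (n : ℤ) (u : smod V n),
      omegaMap Q V n u ∈ (Ideal.span {f, g} • (⊤ : Submodule Q (cone V n))) ↔
        ∃ v : smod V (n - 2),
          u - mulT' Q V n v ∈ (Ideal.span {f, g} • (⊤ : Submodule Q (smod V n)))) ∧
    -- `ω` is surjective modulo `J`
    (∀ (n : ℤ) (w : cone V n), ∃ u : smod V n,
      omegaMap Q V n u - w ∈ (Ideal.span {f, g} • (⊤ : Submodule Q (cone V n)))) ∧
    -- `ω` is a chain map modulo `J`
    (∀ (n : ℤ) (u : smod V n),
      omegaMap Q V (n - 1) (d n (n - 1) u) - coneD Q V d n (omegaMap Q V n u) ∈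
        (Ideal.span {f, g} • (⊤ : Submodule Q (cone V (n - 1))))) := by
  have hgJ : g ∈ Ideal.span ({f, g} : Set Q) := Ideal.subset_span (by simp)
  refine ⟨?_, ?_, ?_, ?_, ?_⟩
  · -- injectivity of ·y₂ mod J
    intro n u hu
    rw [aux_mem_smul_top_iff_components] at hu ⊢
    intro j
    have h2 := hu (j + 2)
    rw [aux_compU_mulT'_high Q V n u j,
      ← Nat.cast_smul_eq_nsmul Q (j / 2 + 1),
      aux_unit_smul_mem_iff Q (aux_isUnit_natCast Q _ (by omega)),
      aux_vcast_mem_iff] at h2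
    exact h2
  · -- ·y₂ chain map mod J
    intro n u
    rw [aux_dMulT' Q V d g hLeib n u, add_sub_cancel_left, aux_ucast_mem_iff]
    exact aux_smul_mem_smul_top Q hgJ _
  · -- exactness
    intro n u
    constructor
    · intro h
      rw [aux_mem_smul_top_prod_iff] at h
      obtain ⟨h1, h0⟩ := h
      rw [aux_omega_fst, aux_vcast_mem_iff] at h1
      rw [aux_omega_snd, aux_vcast_mem_iff] at h0
      obtain ⟨v, hv⟩ := aux_TS' Q V n u
      refine ⟨v, ?_⟩
      have e : u - mulT' Q V n v =
          lofU Q V n 0 (compU Q V n 0 u) + lofU Q V n 1 (compU Q V n 1 u) := by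
        rw [hv]; abel
      rw [e]
      exact Submodule.add_mem _ (aux_map_mem_smul_top Q (lofU Q V n 0) h0)
        (aux_map_mem_smul_top Q (lofU Q V n 1) h1)
    · rintro ⟨v, hv⟩
      have hz : omegaMap Q V n (mulT' Q V n v) = 0 := by
        refine Prod.ext ?_ ?_
        · rw [aux_omega_fst, aux_compU_mulT'_low Q V n v (by omega), map_zero]; rfl
        · rw [aux_omega_snd, aux_compU_mulT'_low Q V n v (by omega), map_zero]; rfl
      have e : omegaMap Q V n u = omegaMap Q V n (u - mulT' Q V n v) := by
        rw [map_sub, hz, sub_zero]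
      rw [e]
      exact aux_map_mem_smul_top Q _ hv
  · -- surjectivity of ω mod J
    intro n w
    refine ⟨lofU Q V n 0 (vcast Q V (show (n : ℤ) = n - ((0 : ℕ) : ℤ) by push_cast; ring) w.2) +
      lofU Q V n 1 (vcast Q V (show n - 1 = n - ((1 : ℕ) : ℤ) by push_cast; ring) w.1), ?_⟩
    have e : omegaMap Q V n
        (lofU Q V n 0 (vcast Q V (show (n : ℤ) = n - ((0 : ℕ) : ℤ) by push_cast; ring) w.2) +
         lofU Q V n 1 (vcast Q V (show n - 1 = n - ((1 : ℕ) : ℤ) by push_cast; ring) w.1)) = w := by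
      refine Prod.ext ?_ ?_
      · rw [aux_omega_fst, map_add, aux_compU_lofU_ne Q V _ (by omega : (0 : ℕ) ≠ 1),
          aux_compU_lofU_self Q V _ _, zero_add, aux_vcast_vcast, aux_vcast_self]
      · rw [aux_omega_snd, map_add, aux_compU_lofU_ne Q V _ (by omega : (1 : ℕ) ≠ 0),
          aux_compU_lofU_self Q V _ _]
        simp [aux_vcast_vcast, aux_vcast_self]
    rw [e, sub_self]
    exact Submodule.zero_mem _
  · -- ω chain map mod J
    intro n u
    set u0 := compU Q V n 0 u with hu0
    set u1 := compU Q V n 1 u with hu1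
    set x : V ((n - 1) - ((0 : ℕ) : ℤ)) :=
      vcast Q V (show n - ((1 : ℕ) : ℤ) = (n - 1) - ((0 : ℕ) : ℤ) by push_cast; ring) u1 with hx
    obtain ⟨v, hv⟩ := aux_TS' Q V n u
    have hsub : u - lofU Q V n 0 u0 = lofU Q V n 1 u1 + mulT' Q V n v := by
      rw [hv]; abel
    have hiota : iotaV Q V n ((omegaMap Q V n u).2) = lofU Q V n 0 u0 := by
      rw [aux_omega_snd, aux_iota_lof, aux_vcast_vcast, aux_vcast_self]
    have hiota1 : iotaV Q V (n - 1) ((omegaMap Q V n u).1) = lofU Q V (n - 1) 0 x := by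
      rw [aux_omega_fst, aux_iota_lof, aux_vcast_vcast]
    have hlof1 : lofU Q V n 1 u1 =
        ucast Q V (show n - 1 + 1 = n by ring) (mulY Q V (n - 1) (lofU Q V (n - 1) 0 x)) := by
      rw [aux_mulY_lofU_even Q V (n - 1) 0 rfl x,
        aux_ucast_lofU Q V (show n - 1 + 1 = n by ring), aux_vcast_vcast, aux_vcast_vcast]
      rfl
    have hmem_mulT : ∀ j : ℕ, j < 2 → compU Q V (n - 1) j (d n (n - 1) (mulT' Q V n v)) ∈
        Ideal.span ({f, g} : Set Q) • (⊤ : Submodule Q (V ((n - 1) - (j : ℤ)))) := by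
      intro j hj
      rw [aux_dMulT' Q V d g hLeib n v, map_add, aux_compU_mulT'_low Q V _ _ hj, zero_add,
        aux_compU_ucast Q V (show n - 2 + 1 = n - 1 by ring), map_smul,
        aux_vcast_mem_iff]
      exact aux_smul_mem_smul_top Q hgJ _
    have hA := aux_lemA Q V d f g hanng hcomplex hLeib (n - 1) (lofU Q V (n - 1) 0 x)
    rw [aux_mem_smul_top_prod_iff]
    constructor
    · -- first component
      have key1 : compU Q V (n - 1) 1 (d n (n - 1) (u - lofU Q V n 0 u0)) +
          vcast Q V (show (n : ℤ) - 2 - ((0 : ℕ) : ℤ) = (n - 1) - ((1 : ℕ) : ℤ) by push_cast; ring)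
            (compU Q V (n - 2) 0 (d (n - 1) (n - 2) (lofU Q V (n - 1) 0 x))) ∈
          Ideal.span ({f, g} : Set Q) • (⊤ : Submodule Q (V ((n - 1) - ((1 : ℕ) : ℤ)))) := by
        rw [hsub, map_add, map_add]
        have hA1 := aux_map_mem_smul_top Q (compU Q V (n - 1) 1) hA
        rw [map_add] at hA1
        have e : compU Q V (n - 1) 1 (ucast Q V (show n - 1 - 1 + 1 = n - 1 by ring)
            (mulY Q V (n - 1 - 1) (d (n - 1) (n - 1 - 1) (lofU Q V (n - 1) 0 x)))) =
            vcast Q V (show (n : ℤ) - 2 - ((0 : ℕ) : ℤ) = (n - 1) - ((1 : ℕ) : ℤ) by push_cast; ring)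
              (compU Q V (n - 2) 0 (d (n - 1) (n - 2) (lofU Q V (n - 1) 0 x))) := by
          rw [aux_compU_ucast Q V (show n - 1 - 1 + 1 = n - 1 by ring),
            aux_compU_mulY_one Q V (n - 1 - 1),
            aux_d_congr Q V d (show (n : ℤ) - 2 = n - 1 - 1 by ring) (lofU Q V (n - 1) 0 x),
            aux_compU_ucast Q V (show (n : ℤ) - 2 = n - 1 - 1 by ring),
            aux_vcast_vcast, aux_vcast_vcast]
        rw [e] at hA1
        rw [hlof1, aux_d_ucast Q V d (show n - 1 + 1 = n by ring), add_right_comm]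
        exact Submodule.add_mem _ hA1 (hmem_mulT 1 (by omega))
      have e1 : (omegaMap Q V (n - 1) (d n (n - 1) u) - coneD Q V d n (omegaMap Q V n u)).1 =
          vcast Q V (show (n - 1) - ((1 : ℕ) : ℤ) = n - 1 - 1 by push_cast; ring)
            (compU Q V (n - 1) 1 (d n (n - 1) (u - lofU Q V n 0 u0)) +
              vcast Q V (show (n : ℤ) - 2 - ((0 : ℕ) : ℤ) = (n - 1) - ((1 : ℕ) : ℤ) by push_cast; ring)
                (compU Q V (n - 2) 0 (d (n - 1) (n - 2) (lofU Q V (n - 1) 0 x)))) := by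
        rw [Prod.fst_sub, aux_coneD_fst, hiota, hiota1, aux_omega_fst,
          map_sub (d n (n - 1)), map_sub (compU Q V (n - 1) 1),
          map_add (vcast Q V (show (n - 1) - ((1 : ℕ) : ℤ) = n - 1 - 1 by push_cast; ring)),
          map_sub (vcast Q V (show (n - 1) - ((1 : ℕ) : ℤ) = n - 1 - 1 by push_cast; ring)),
          aux_vcast_vcast]
        abel
      rw [e1, aux_vcast_mem_iff]
      exact key1
    · -- second component
      have key0 : compU Q V (n - 1) 0 (d n (n - 1) (u - lofU Q V n 0 u0)) ∈
          Ideal.span ({f, g} : Set Q) • (⊤ : Submodule Q (V ((n - 1) - ((0 : ℕ) : ℤ)))) := by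
        rw [hsub, map_add, map_add]
        refine Submodule.add_mem _ ?_ (hmem_mulT 0 (by omega))
        have hA0 := aux_map_mem_smul_top Q (compU Q V (n - 1) 0) hA
        rw [map_add] at hA0
        have e : compU Q V (n - 1) 0 (ucast Q V (show n - 1 - 1 + 1 = n - 1 by ring)
            (mulY Q V (n - 1 - 1) (d (n - 1) (n - 1 - 1) (lofU Q V (n - 1) 0 x)))) = 0 := by
          rw [aux_compU_ucast Q V (show n - 1 - 1 + 1 = n - 1 by ring),
            aux_compU_mulY_zero Q V (n - 1 - 1), map_zero]
        rw [e, add_zero] at hA0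
        rw [hlof1, aux_d_ucast Q V d (show n - 1 + 1 = n by ring)]
        exact hA0
      have e2 : (omegaMap Q V (n - 1) (d n (n - 1) u) - coneD Q V d n (omegaMap Q V n u)).2 =
          vcast Q V (show (n - 1) - ((0 : ℕ) : ℤ) = n - 1 by push_cast; ring)
            (compU Q V (n - 1) 0 (d n (n - 1) (u - lofU Q V n 0 u0))) := by
        rw [Prod.snd_sub, aux_coneD_snd, hiota, aux_omega_snd,
          map_sub (d n (n - 1)), map_sub (compU Q V (n - 1) 0), map_sub]
      rw [e2, aux_vcast_mem_iff]
      exact key0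

end
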